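/- Let A be a {0,1}-valued n×n matrix. Define 2-marginals for 3-tables of size (n,n,2) by v_{i,j,+} := A_{i,j}, v_{i,+,1} := 1, v_{+,j,1} := 1, v_{i,+,2} := A_{i,+} − 1, v_{+,j,2} := A_{+,j} − 1 for all 1 ≤ i,j ≤ n (assuming all row sums A_{i,+} and column sums A_{+,j} are at least 1). Then the number of nonnegative integer 3-tables of size (n,n,2) satisfying all these 2-marginals equals the permanent of A. -/
import Mathlib


/-- The number of (n,n,2)-tables with 2-marginals constructed from a 0/1
matrix A equals the permanent of A. -/
theorem count_tables_eq_permanent (n : ℕ) (A : Fin n → Fin n → ℕ)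
    (hA : ∀ i j, A i j ≤ 1)
    (hrow : ∀ i, 1 ≤ ∑ j, A i j) (hcol : ∀ j, 1 ≤ ∑ i, A i j) :
    Set.ncard {x : Fin n → Fin n → Fin 2 → ℕ |
      (∀ i j, ∑ k, x i j k = A i j) ∧
      (∀ i, ∑ j, x i j 0 = 1) ∧
      (∀ j, ∑ i, x i j 0 = 1) ∧
      (∀ i, ∑ j, x i j 1 = (∑ j, A i j) - 1) ∧
      (∀ j, ∑ i, x i j 1 = (∑ i, A i j) - 1)} =
    ∑ σ : Equiv.Perm (Fin n), ∏ i, A i (σ i) := by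
  classical
  set P : Equiv.Perm (Fin n) → Prop := fun σ => ∀ i, A i (σ i) = 1 with hP
  set f : Equiv.Perm (Fin n) → (Fin n → Fin n → Fin 2 → ℕ) := fun σ i j k =>
    if k = 0 then (if σ i = j then 1 else 0) else A i j - (if σ i = j then 1 else 0)
    with hf
  have hf0 : ∀ σ i j, f σ i j 0 = (if σ i = j then 1 else 0) := by
    intro σ i j; simp [hf]
  have hf1 : ∀ σ i j, f σ i j 1 = A i j - (if σ i = j then 1 else 0) := by
    intro σ i j; simp [hf]
  have hite : ∀ (σ : Equiv.Perm (Fin n)), P σ → ∀ i j,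
      (if σ i = j then (1:ℕ) else 0) ≤ A i j := by
    intro σ hσ i j
    by_cases h : σ i = j
    · rw [if_pos h, ← h, hσ i]
    · rw [if_neg h]; exact Nat.zero_le _
  -- the set equals the image of {σ | P σ} under f
  have himg : {x : Fin n → Fin n → Fin 2 → ℕ |
      (∀ i j, ∑ k, x i j k = A i j) ∧
      (∀ i, ∑ j, x i j 0 = 1) ∧
      (∀ j, ∑ i, x i j 0 = 1) ∧
      (∀ i, ∑ j, x i j 1 = (∑ j, A i j) - 1) ∧
      (∀ j, ∑ i, x i j 1 = (∑ i, A i j) - 1)} = f '' {σ | P σ} := by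
    ext x
    constructor
    · rintro ⟨h1, h2, h3, h4, h5⟩
      have hle : ∀ i j, x i j 0 + x i j 1 = A i j := by
        intro i j
        have := h1 i j
        rwa [Fin.sum_univ_two] at this
      have hb01 : ∀ i j, x i j 0 ≤ 1 := by
        intro i j
        calc x i j 0 ≤ x i j 0 + x i j 1 := Nat.le_add_right _ _
        _ = A i j := hle i j
        _ ≤ 1 := hA i j
      -- existence and uniqueness of the 1 in each row of layer 0
      have hex : ∀ i, ∃! j, x i j 0 = 1 := by
        intro i
        have h2i := h2 i
        obtain ⟨j, -, hj⟩ := Finset.exists_ne_zero_of_sum_ne_zero (by rw [h2i]; omega)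
        have hj1 : x i j 0 = 1 := by have := hb01 i j; omega
        refine ⟨j, hj1, ?_⟩
        intro j' hj'
        by_contra hne
        have hsum2 : x i j 0 + x i j' 0 ≤ ∑ t, x i t 0 := by
          have hmem : j' ∈ Finset.univ.erase j := Finset.mem_erase.2 ⟨hne, Finset.mem_univ _⟩
          calc x i j 0 + x i j' 0
              ≤ x i j 0 + ∑ t ∈ Finset.univ.erase j, x i t 0 :=
                Nat.add_le_add_left (Finset.single_le_sum (f := fun t => x i t 0)
                  (fun t _ => Nat.zero_le _) hmem) _
            _ = ∑ t, x i t 0 := Finset.add_sum_erase _ (fun t => x i t 0) (Finset.mem_univ j)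
        rw [h2i] at hsum2; omega
      choose g hg hgu using hex
      have hginj : Function.Injective g := by
        intro i1 i2 h12
        by_contra hne
        have h3j := h3 (g i1)
        have hsum2 : x i1 (g i1) 0 + x i2 (g i1) 0 ≤ ∑ t, x t (g i1) 0 := by
          have hmem : i2 ∈ Finset.univ.erase i1 :=
            Finset.mem_erase.2 ⟨Ne.symm hne, Finset.mem_univ _⟩
          calc x i1 (g i1) 0 + x i2 (g i1) 0
              ≤ x i1 (g i1) 0 + ∑ t ∈ Finset.univ.erase i1, x t (g i1) 0 :=
                Nat.add_le_add_left (Finset.single_le_sum (f := fun t => x t (g i1) 0)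
                  (fun t _ => Nat.zero_le _) hmem) _
            _ = ∑ t, x t (g i1) 0 := Finset.add_sum_erase _ (fun t => x t (g i1) 0) (Finset.mem_univ i1)
        rw [h3j] at hsum2
        have hgi1 : x i1 (g i1) 0 = 1 := hg i1
        have hgi2 : x i2 (g i2) 0 = 1 := hg i2
        rw [← h12] at hgi2
        omega
      let σ : Equiv.Perm (Fin n) := Equiv.ofBijective g (Finite.injective_iff_bijective.1 hginj)
      have hσ : ∀ i, σ i = g i := fun i => rfl
      have hzero : ∀ i j, j ≠ g i → x i j 0 = 0 := by
        intro i j hne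
        by_contra h
        have hj1 : x i j 0 = 1 := by have := hb01 i j; omega
        exact hne (hgu i j hj1)
      refine ⟨σ, ?_, ?_⟩
      · intro i
        have h1' := hle i (g i)
        have h2' : x i (g i) 0 = 1 := hg i
        have h3' := hA i (g i)
        simp only [hσ]
        omega
      · funext i j k
        have hk : k = 0 ∨ k = 1 := by
          rcases k with ⟨kv, hkv⟩
          interval_cases kv
          · left; rfl
          · right; rfl
        rcases hk with rfl | rfl
        · rw [hf0, hσ]
          by_cases h : g i = j
          · rw [if_pos h, ← h]; exact (hg i).symm
          · rw [if_neg h]; exact (hzero i j (fun hh => h hh.symm)).symm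
        · rw [hf1, hσ]
          have h1' := hle i j
          by_cases h : g i = j
          · rw [if_pos h]
            have h2' : x i (g i) 0 = 1 := hg i
            rw [h] at h2'; omega
          · rw [if_neg h]
            have h2' := hzero i j (fun hh => h hh.symm)
            omega
    · rintro ⟨σ, hσ, rfl⟩
      have hs : ∀ i, (∑ j, if σ i = j then (1:ℕ) else 0) = 1 := by
        intro i; simp
      have hs' : ∀ j, (∑ i, if σ i = j then (1:ℕ) else 0) = 1 := by
        intro j
        have he : ∀ i, (σ i = j) ↔ (i = σ.symm j) := by
          intro i; constructor
          · intro h; simp [← h]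
          · intro h; simp [h]
        simp_rw [he]
        simp
      refine ⟨?_, ?_, ?_, ?_, ?_⟩
      · intro i j
        rw [Fin.sum_univ_two, hf0, hf1]
        have := hite σ hσ i j
        omega
      · intro i
        simp only [hf0]
        exact hs i
      · intro j
        simp only [hf0]
        exact hs' j
      · intro i
        simp only [hf1]
        rw [Finset.sum_tsub_distrib _ (fun j _ => hite σ hσ i j), hs i]
      · intro j
        simp only [hf1]
        rw [Finset.sum_tsub_distrib _ (fun i _ => hite σ hσ i j), hs' j]
  rw [himg]
  have hfinj : Function.Injective f := by
    intro σ1 σ2 h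
    ext i : 1
    by_contra hne
    have hc := congrFun (congrFun (congrFun h i) (σ1 i)) 0
    rw [hf0, hf0, if_pos rfl, if_neg (fun hh : σ2 i = σ1 i => hne hh.symm)] at hc
    simp at hc
  rw [Set.ncard_image_of_injective _ hfinj]
  have hcard : {σ | P σ}.ncard = (Finset.univ.filter P).card := by
    rw [Set.ncard_eq_toFinset_card']
    congr 1
    ext σ
    simp [P]
  rw [hcard, Finset.card_filter]
  apply Finset.sum_congr rfl
  intro σ _
  by_cases h : P σ
  · rw [if_pos h, Finset.prod_eq_one (fun i _ => h i)]
  · rw [if_neg h]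
    have h' : ∃ i, A i (σ i) ≠ 1 := by
      by_contra hc
      push_neg at hc
      exact h hc
    obtain ⟨i, hi⟩ := h'
    have hz : A i (σ i) = 0 := by have := hA i (σ i); omega
    exact (Finset.prod_eq_zero (Finset.mem_univ i) hz).symm
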